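/- Let v_1, …, v_m be vectors in a real inner product space with ‖v_i‖² = 4 for every i, and let R ⊆ {2,…,m} be a set of indices such that for every i ∈ R there exists some j < i with ⟨v_j, v_i⟩ = 1/2. Then the determinant of the m×m Gram matrix of v_1,…,v_m is at most 4^m · (63/64)^{|R|}. -/

import Mathlib

theorem stmt_14 {E : Type*} [NormedAddCommGroup E] [InnerProductSpace ℝ E]
    (m : ℕ) (v : Fin m → E) (hnorm : ∀ i, ‖v i‖ ^ 2 = 4)
    (R : Finset (Fin m))
    (hR : ∀ i ∈ R, ∃ j : Fin m, j < i ∧ (inner ℝ (v j) (v i) : ℝ) = 1 / 2)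
    (G : Matrix (Fin m) (Fin m) ℝ)
    (hG : ∀ i j, G i j = inner ℝ (v i) (v j)) :
    G.det ≤ 4 ^ m * (63 / 64 : ℝ) ^ R.card := by
  classical
  haveI : WellFoundedLT (Fin m) := inferInstance
  set g : Fin m → E := InnerProductSpace.gramSchmidt ℝ v with hg
  set d : Fin m → ℝ := fun i => ‖g i‖ ^ 2 with hd
  -- inner of g i with v i is ‖g i‖²
  have hself : ∀ i, (inner ℝ (g i) (v i) : ℝ) = ‖g i‖ ^ 2 := by
    intro i
    conv_lhs => rw [InnerProductSpace.gramSchmidt_def'' ℝ v i]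
    simp only [← hg, RCLike.ofReal_real_eq_id, id]
    rw [inner_add_right, inner_sum, real_inner_self_eq_norm_sq]
    simp only [real_inner_smul_right]
    rw [Finset.sum_eq_zero, add_zero]
    intro j hj
    rw [InnerProductSpace.gramSchmidt_orthogonal ℝ v (Finset.mem_Iio.1 hj).ne', mul_zero]
  -- the coefficient matrix
  set L : Matrix (Fin m) (Fin m) ℝ :=
    fun i j => if i = j then 1 else (inner ℝ (g j) (v i) : ℝ) / ‖g j‖ ^ 2 with hL
  have hLzero : ∀ i j : Fin m, i < j → L i j = 0 := by
    intro i j hij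
    have h1 : (inner ℝ (g j) (v i) : ℝ) = 0 := InnerProductSpace.gramSchmidt_inv_triangular ℝ v hij
    simp [hL, hij.ne, h1]
  -- decomposition of v i
  have hv : ∀ i, v i = ∑ j, L i j • g j := by
    intro i
    have hsub : ∑ j, L i j • g j = ∑ j ∈ Finset.Iic i, L i j • g j := by
      refine (Finset.sum_subset (Finset.subset_univ _) ?_).symm
      intro j _ hj
      rw [hLzero i j (by simpa using hj), zero_smul]
    rw [hsub, ← Finset.Iio_insert, Finset.sum_insert (by simp)]
    have hii : L i i = 1 := by simp [hL]
    rw [hii, one_smul]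
    conv_lhs => rw [InnerProductSpace.gramSchmidt_def'' ℝ v i]
    simp only [← hg, RCLike.ofReal_real_eq_id, id]
    congr 1
    refine Finset.sum_congr rfl fun j hj => ?_
    have : L i j = (inner ℝ (g j) (v i) : ℝ) / ‖g j‖ ^ 2 := by
      simp [hL, (Finset.mem_Iio.1 hj).ne']
    rw [this]
  -- Gram matrix entries via L and d
  have hGLD : ∀ i k, G i k = ∑ j, L i j * (d j * L k j) := by
    intro i k
    rw [hG i k]
    conv_lhs => rw [hv i, hv k]
    rw [sum_inner]
    refine Finset.sum_congr rfl fun j _ => ?_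
    rw [real_inner_smul_left, inner_sum]
    rw [Finset.sum_eq_single j]
    · rw [real_inner_smul_right, real_inner_self_eq_norm_sq]
      simp only [hd]; ring
    · intro l _ hlj
      rw [real_inner_smul_right, InnerProductSpace.gramSchmidt_orthogonal ℝ v (Ne.symm hlj), mul_zero]
    · intro h; exact absurd (Finset.mem_univ j) h
  have hfact : G = L * Matrix.diagonal d * L.transpose := by
    ext i k
    rw [Matrix.mul_apply, hGLD i k]
    refine Finset.sum_congr rfl fun j _ => ?_
    rw [Matrix.mul_diagonal, Matrix.transpose_apply]
    ring
  have hdetL : L.det = 1 := by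
    have htri : L.BlockTriangular OrderDual.toDual := by
      intro i j hij
      exact hLzero i j hij
    rw [Matrix.det_of_lowerTriangular L htri]
    have h1 : ∀ i : Fin m, L i i = 1 := fun i => by simp [hL]
    simp [h1]
  have hdetG : G.det = ∏ i, d i := by
    rw [hfact, Matrix.det_mul, Matrix.det_mul, Matrix.det_transpose, hdetL,
      Matrix.det_diagonal, one_mul, mul_one]
  -- bounds on d
  have hd_nonneg : ∀ i, 0 ≤ d i := fun i => sq_nonneg _
  have hd_le4 : ∀ i, d i ≤ 4 := by
    intro i
    have h1 : (inner ℝ (g i) (v i) : ℝ) ≤ ‖g i‖ * ‖v i‖ := real_inner_le_norm _ _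
    have hvi : ‖v i‖ = 2 := by
      have := hnorm i
      nlinarith [norm_nonneg (v i)]
    rw [hself i, hvi] at h1
    have hgle : ‖g i‖ ≤ 2 := by nlinarith [norm_nonneg (g i)]
    have := norm_nonneg (g i)
    simp only [hd]
    nlinarith
  have hd_leR : ∀ i ∈ R, d i ≤ 63 / 16 := by
    intro i hi
    obtain ⟨j, hji, hinner⟩ := hR i hi
    set w : E := v i - g i with hw
    have how : (inner ℝ (g i) w : ℝ) = 0 := by
      rw [hw, inner_sub_right, hself i, real_inner_self_eq_norm_sq, sub_self]
    have hsplit : ‖v i‖ ^ 2 = ‖g i‖ ^ 2 + ‖w‖ ^ 2 := by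
      have hvw : v i = g i + w := by rw [hw]; abel
      rw [hvw, norm_add_sq_real, how]
      ring
    have hjw : (inner ℝ (v j) w : ℝ) = 1 / 2 := by
      have h0 : (inner ℝ (g i) (v j) : ℝ) = 0 := InnerProductSpace.gramSchmidt_inv_triangular ℝ v hji
      rw [hw, inner_sub_right, hinner, real_inner_comm, h0, sub_zero]
    have hjn : ‖v j‖ = 2 := by
      have := hnorm j
      nlinarith [norm_nonneg (v j)]
    have h1 : (1 / 2 : ℝ) ≤ 2 * ‖w‖ := by
      have := real_inner_le_norm (v j) w
      rw [hjw, hjn] at this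
      linarith
    have hw2 : (1 / 16 : ℝ) ≤ ‖w‖ ^ 2 := by nlinarith [norm_nonneg w]
    have hdi : d i = 4 - ‖w‖ ^ 2 := by
      simp only [hd]
      have := hnorm i
      linarith [hsplit]
    linarith
  -- combine
  rw [hdetG]
  have hsplit : ∏ i, d i = (∏ i ∈ R, d i) * ∏ i ∈ Finset.univ \ R, d i := by
    rw [← Finset.prod_sdiff (Finset.subset_univ R), mul_comm]
  have h1 : ∏ i ∈ R, d i ≤ (63 / 16 : ℝ) ^ R.card := by
    rw [← Finset.prod_const]
    exact Finset.prod_le_prod (fun i _ => hd_nonneg i) (fun i hi => hd_leR i hi)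
  have h2 : ∏ i ∈ Finset.univ \ R, d i ≤ (4 : ℝ) ^ (m - R.card) := by
    have hcard : (Finset.univ \ R).card = m - R.card := by
      rw [Finset.card_sdiff_of_subset (Finset.subset_univ R), Finset.card_univ, Fintype.card_fin]
    rw [← hcard, ← Finset.prod_const]
    exact Finset.prod_le_prod (fun i _ => hd_nonneg i) (fun i _ => hd_le4 i)
  have hnn2 : (0 : ℝ) ≤ ∏ i ∈ Finset.univ \ R, d i := Finset.prod_nonneg fun i _ => hd_nonneg i
  have key : (∏ i ∈ R, d i) * ∏ i ∈ Finset.univ \ R, d i ≤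
      (63 / 16 : ℝ) ^ R.card * (4 : ℝ) ^ (m - R.card) :=
    mul_le_mul h1 h2 hnn2 (by positivity)
  have hRle : R.card ≤ m := by
    simpa using Finset.card_le_univ R
  have heq : (63 / 16 : ℝ) ^ R.card * (4 : ℝ) ^ (m - R.card) =
      4 ^ m * (63 / 64 : ℝ) ^ R.card := by
    have h63 : (63 / 16 : ℝ) = 4 * (63 / 64) := by norm_num
    rw [h63, mul_pow, mul_assoc, mul_comm ((63 / 64 : ℝ) ^ R.card) _, ← mul_assoc, ← pow_add,
      Nat.add_sub_cancel' hRle]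
  calc ∏ i, d i = (∏ i ∈ R, d i) * ∏ i ∈ Finset.univ \ R, d i := hsplit
    _ ≤ (63 / 16 : ℝ) ^ R.card * (4 : ℝ) ^ (m - R.card) := key
    _ = 4 ^ m * (63 / 64 : ℝ) ^ R.card := heq
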